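/- Let Φ = {φ_i}_{i∈Λ} be a finite similarity IFS on ℝ^d with attractor K. Then K is not contained in any affine hyperplane if and only if there exists a section Π ⊂ Λ* such that the IFS {φ_i}_{i∈Π} is diffuse (i.e., there exists c > 0 such that every affine hyperplane ℒ admits some i ∈ Π with φ_i(K) ∩ ℒ^(c) = ∅). Moreover, either condition implies that K is hyperplane diffuse. -/

import Mathlib

open Metric Filter

noncomputable section
def compWord {Λ E : Type*} (φ : Λ → E → E) (w : List Λ) : E → E :=
  w.foldr (fun i g => φ i ∘ g) id

/-- A section: a finite set of finite words whose cylinder sets partition `Λ^ℕ`, i.e. every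
infinite word has exactly one prefix in the section. -/
def IsSection {Λ : Type*} (Pi : Finset (List Λ)) : Prop :=
  ∀ x : ℕ → Λ, ∃! w : List Λ, w ∈ Pi ∧ ∀ i : Fin w.length, w.get i = x i

/-- A set is hyperplane `β`-diffuse. -/
def HyperplaneDiffuseWith {d : ℕ} (F : Set (EuclideanSpace ℝ (Fin d))) (β : ℝ) : Prop :=
  ∃ ξ₀ : ℝ, 0 < ξ₀ ∧ ∀ ξ : ℝ, 0 < ξ → ξ < ξ₀ → ∀ x ∈ F,
    ∀ v : EuclideanSpace ℝ (Fin d), v ≠ 0 → ∀ c' : ℝ,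
      ((F ∩ ball x ξ) \ thickening (β * ξ) {y | inner ℝ v y = (c' : ℝ)}).Nonempty

theorem compWord_cons {Λ E : Type*} (φ : Λ → E → E) (i : Λ) (w : List Λ) :
    compWord φ (i :: w) = φ i ∘ compWord φ w := rfl

theorem dist_compWord {Λ X : Type*} [PseudoMetricSpace X] (φ : Λ → X → X) (r : Λ → ℝ)
    (hsim : ∀ i x y, dist (φ i x) (φ i y) = r i * dist x y) (w : List Λ) (x y : X) :
    dist (compWord φ w x) (compWord φ w y) = (w.map r).prod * dist x y := by
  induction w with
  | nil => simp [compWord]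
  | cons i w ih =>
    rw [compWord_cons]
    simp only [Function.comp_apply, List.map_cons, List.prod_cons, hsim, ih, mul_assoc]

theorem compWord_image_subset {Λ X : Type*} (φ : Λ → X → X) (K : Set X)
    (hsub : ∀ i, φ i '' K ⊆ K) : ∀ w : List Λ, compWord φ w '' K ⊆ K := by
  intro w
  induction w with
  | nil => simp [compWord]
  | cons i w ih =>
    rw [compWord_cons, Set.image_comp]
    exact (Set.image_mono (f := φ i) ih).trans (hsub i)

theorem exists_word_len {Λ X : Type*} (φ : Λ → X → X) (K : Set X)
    (hK : K ⊆ ⋃ i, φ i '' K) :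
    ∀ n : ℕ, ∀ x ∈ K, ∃ f : Fin n → Λ, x ∈ compWord φ (List.ofFn f) '' K := by
  intro n
  induction n with
  | zero =>
    intro x hx
    exact ⟨Fin.elim0, by simpa [compWord] using hx⟩
  | succ n ih =>
    intro x hx
    obtain ⟨i, y, hy, rfl⟩ := Set.mem_iUnion.1 (hK hx)
    obtain ⟨f, z, hz, hzy⟩ := ih y hy
    refine ⟨Fin.cons i f, z, hz, ?_⟩
    rw [List.ofFn_succ]
    simp only [Fin.cons_zero, Fin.cons_succ]
    rw [compWord_cons]
    simp [hzy]

theorem exists_word_scale {Λ X : Type*} (φ : Λ → X → X) (r : Λ → ℝ)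
    (hr : ∀ i, r i ∈ Set.Ioo (0:ℝ) 1) (K : Set X) (hK : K ⊆ ⋃ i, φ i '' K)
    (rmin rmax : ℝ) (hrmin : ∀ i, rmin ≤ r i) (h0 : 0 < rmin) (hrmax : ∀ i, r i ≤ rmax) :
    ∀ n : ℕ, ∀ s : ℝ, rmax ^ n < s → s < 1 → ∀ x ∈ K,
      ∃ w : List Λ, x ∈ compWord φ w '' K ∧ (w.map r).prod ≤ s ∧ rmin * s < (w.map r).prod := by
  intro n
  induction n with
  | zero =>
    intro s hs hs1
    exact absurd (lt_trans (by simpa using hs) hs1) (lt_irrefl 1)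
  | succ n ih =>
    intro s hs hs1 x hx
    obtain ⟨i, y, hy, rfl⟩ := Set.mem_iUnion.1 (hK hx)
    have hipos : 0 < r i := (hr i).1
    by_cases hri : r i ≤ s
    · refine ⟨[i], ⟨y, hy, rfl⟩, by simpa [compWord] using hri, ?_⟩
      have : rmin * s < rmin * 1 := by
        exact mul_lt_mul_of_pos_left hs1 h0
      simp only [List.map_cons, List.map_nil, List.prod_cons, List.prod_nil, mul_one]
      calc rmin * s < rmin := by linarith
      _ ≤ r i := hrmin i
    · push_neg at hri
      have hrmaxpos : 0 < rmax := lt_of_lt_of_le hipos (hrmax i)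
      have h1 : rmax ^ n < s / r i := by
        rw [lt_div_iff₀ hipos]
        calc rmax ^ n * r i ≤ rmax ^ n * rmax := by
              exact mul_le_mul_of_nonneg_left (hrmax i) (pow_nonneg hrmaxpos.le n)
        _ = rmax ^ (n + 1) := by ring
        _ < s := hs
      have h2 : s / r i < 1 := (div_lt_one hipos).2 hri
      obtain ⟨w, hyw, hw1, hw2⟩ := ih (s / r i) h1 h2 y hy
      obtain ⟨z, hz, hzy⟩ := hyw
      refine ⟨i :: w, ⟨z, hz, by rw [compWord_cons]; simp [hzy]⟩, ?_, ?_⟩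
      · simp only [List.map_cons, List.prod_cons]
        calc r i * (w.map r).prod ≤ r i * (s / r i) :=
              mul_le_mul_of_nonneg_left hw1 hipos.le
        _ = s := by field_simp
      · simp only [List.map_cons, List.prod_cons]
        have : r i * (rmin * (s / r i)) < r i * (w.map r).prod :=
          mul_lt_mul_of_pos_left hw2 hipos
        calc rmin * s = r i * (rmin * (s / r i)) := by field_simp
        _ < r i * (w.map r).prod := this

theorem prod_le_pow_of_le {Λ : Type*} (r : Λ → ℝ) (rmax : ℝ)
    (h0 : ∀ i, 0 < r i) (h : ∀ i, r i ≤ rmax) :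
    ∀ w : List Λ, (w.map r).prod ≤ rmax ^ w.length := by
  intro w
  induction w with
  | nil => simp
  | cons i w ih =>
    have h1 : 0 ≤ (w.map r).prod :=
      le_of_lt (List.prod_pos (by
        intro t ht
        obtain ⟨j, _, rfl⟩ := List.mem_map.1 ht
        exact h0 j))
    simp only [List.map_cons, List.prod_cons, List.length_cons, pow_succ]
    have hrm : 0 < rmax := lt_of_lt_of_le (h0 i) (h i)
    calc r i * (w.map r).prod ≤ rmax * rmax ^ w.length :=
          mul_le_mul (h i) ih h1 hrm.le
    _ = rmax ^ (w.length + 1) := by ring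
    _ = rmax ^ w.length * rmax := by ring

theorem abs_inner_lt_of_mem_thickening {d : ℕ} {v : EuclideanSpace ℝ (Fin d)} (hv : v ≠ 0)
    {a c : ℝ} {y : EuclideanSpace ℝ (Fin d)}
    (h : y ∈ thickening c {z : EuclideanSpace ℝ (Fin d) | inner ℝ v z = (a : ℝ)}) :
    |(inner ℝ v y : ℝ) - a| < c * ‖v‖ := by
  obtain ⟨z, hz, hdist⟩ := mem_thickening_iff.1 h
  have hz' : (inner ℝ v z : ℝ) = a := hz
  calc |(inner ℝ v y : ℝ) - a| = |(inner ℝ v (y - z) : ℝ)| := by rw [inner_sub_right, hz']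
  _ ≤ ‖v‖ * ‖y - z‖ := abs_real_inner_le_norm v (y - z)
  _ < ‖v‖ * c := by
      have h2 : ‖y - z‖ < c := by rwa [← dist_eq_norm]
      exact mul_lt_mul_of_pos_left h2 (norm_pos_iff.2 hv)
  _ = c * ‖v‖ := mul_comm _ _

set_option maxHeartbeats 1000000 in
theorem exists_eps_of_not_hyperplane {d : ℕ} (K : Set (EuclideanSpace ℝ (Fin d)))
    (hKne : K.Nonempty)
    (hyp : ¬ ∃ v : EuclideanSpace ℝ (Fin d), v ≠ 0 ∧ ∃ a : ℝ,
        K ⊆ {x | inner ℝ v x = (a : ℝ)}) :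
    ∃ ε : ℝ, 0 < ε ∧ ∀ v : EuclideanSpace ℝ (Fin d), ‖v‖ = 1 → ∀ a : ℝ,
      ∃ x ∈ K, ε ≤ |(inner ℝ v x : ℝ) - a| := by
  by_contra hcon
  push_neg at hcon
  have hcon' : ∀ n : ℕ, ∃ v : EuclideanSpace ℝ (Fin d), ‖v‖ = 1 ∧ ∃ a : ℝ,
      ∀ x ∈ K, |(inner ℝ v x : ℝ) - a| < 1 / (n + 1) := by
    intro n
    obtain ⟨v, hv1, a, ha⟩ := hcon (1 / (n + 1)) (by positivity)
    exact ⟨v, hv1, a, fun x hx => ha x hx⟩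
  choose v hv a ha using hcon'
  obtain ⟨x₀, hx₀⟩ := hKne
  set R : ℝ := ‖x₀‖ + 1 with hR
  have haR : ∀ n, a n ∈ Set.Icc (-R) R := by
    intro n
    have h1 := ha n x₀ hx₀
    have h2 : |(inner ℝ (v n) x₀ : ℝ)| ≤ ‖x₀‖ := by
      have := abs_real_inner_le_norm (v n) x₀
      rwa [hv n, one_mul] at this
    have h3 : (1 : ℝ) / (n + 1) ≤ 1 := by
      rw [div_le_one (by positivity)]
      linarith [Nat.cast_nonneg (α := ℝ) n]
    rw [abs_lt] at h1
    rw [abs_le] at h2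
    exact ⟨by linarith, by linarith⟩
  have hcpt : IsCompact ((sphere (0 : EuclideanSpace ℝ (Fin d)) 1) ×ˢ Set.Icc (-R) R) :=
    (isCompact_sphere 0 1).prod isCompact_Icc
  have hmem : ∀ n, (v n, a n) ∈ (sphere (0 : EuclideanSpace ℝ (Fin d)) 1) ×ˢ Set.Icc (-R) R :=
    fun n => ⟨mem_sphere_zero_iff_norm.2 (hv n), haR n⟩
  obtain ⟨⟨vL, aL⟩, hmemL, ψ, hψ, hlim⟩ := hcpt.tendsto_subseq hmem
  have hvL : ‖vL‖ = 1 := mem_sphere_zero_iff_norm.1 hmemL.1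
  apply hyp
  refine ⟨vL, by intro h; rw [h, norm_zero] at hvL; norm_num at hvL, aL, ?_⟩
  intro x hx
  have hc : Continuous fun p : EuclideanSpace ℝ (Fin d) × ℝ => (inner ℝ p.1 x : ℝ) - p.2 :=
    (continuous_fst.inner continuous_const).sub continuous_snd
  have hc1 : Tendsto (fun k => (inner ℝ (v (ψ k)) x : ℝ) - a (ψ k)) atTop
      (nhds ((inner ℝ vL x : ℝ) - aL)) := by
    have h5 := (hc.tendsto (vL, aL)).comp hlim
    exact h5
  have hc2 : Tendsto (fun k => |(inner ℝ (v (ψ k)) x : ℝ) - a (ψ k)|) atTop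
      (nhds |(inner ℝ vL x : ℝ) - aL|) := hc1.abs
  have hb : Tendsto (fun k : ℕ => (1 : ℝ) / (ψ k + 1)) atTop (nhds 0) :=
    tendsto_one_div_add_atTop_nhds_zero_nat.comp hψ.tendsto_atTop
  have hle : |(inner ℝ vL x : ℝ) - aL| ≤ 0 := by
    refine le_of_tendsto_of_tendsto' hc2 hb fun k => ?_
    exact (ha (ψ k) x hx).le
  have : |(inner ℝ vL x : ℝ) - aL| = 0 := le_antisymm hle (abs_nonneg _)
  have := abs_eq_zero.1 this
  simpa [sub_eq_zero] using this

theorem compWord_affine {d : ℕ} {Λ : Type*} (φ : Λ → EuclideanSpace ℝ (Fin d) → EuclideanSpace ℝ (Fin d))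
    (r : Λ → ℝ) (hr : ∀ i, r i ∈ Set.Ioo (0 : ℝ) 1)
    (hsim : ∀ i x y, dist (φ i x) (φ i y) = r i * dist x y) (w : List Λ) :
    ∃ (A : EuclideanSpace ℝ (Fin d) →ₗᵢ[ℝ] EuclideanSpace ℝ (Fin d)) (b : EuclideanSpace ℝ (Fin d)),
      ∀ x, compWord φ w x = (w.map r).prod • A x + b := by
  set ρ := (w.map r).prod with hρdef
  have hρ : 0 < ρ := List.prod_pos (by
    intro t ht
    obtain ⟨i, _, rfl⟩ := List.mem_map.1 ht
    exact (hr i).1)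
  set g : EuclideanSpace ℝ (Fin d) → EuclideanSpace ℝ (Fin d) :=
    fun x => ρ⁻¹ • compWord φ w x with hg
  have hgi : Isometry g := by
    refine Isometry.of_dist_eq fun x y => ?_
    rw [hg]
    simp only
    rw [dist_smul₀, dist_compWord φ r hsim, ← hρdef, Real.norm_eq_abs,
      abs_of_pos (inv_pos.2 hρ)]
    field_simp
  set F := hgi.affineIsometryOfStrictConvexSpace with hF
  refine ⟨F.linearIsometry, ρ • g 0, fun x => ?_⟩
  have h1 : g x = F.linearIsometry x + g 0 := by
    have h2 := F.map_vadd 0 x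
    simpa [hF] using h2
  have h3 : compWord φ w x = ρ • g x := by
    rw [hg]; simp [smul_inv_smul₀ (ne_of_gt hρ)]
  rw [h3, h1, smul_add]

theorem exists_adjoint_vec {d : ℕ}
    (A : EuclideanSpace ℝ (Fin d) →ₗᵢ[ℝ] EuclideanSpace ℝ (Fin d)) (v : EuclideanSpace ℝ (Fin d)) :
    ∃ v' : EuclideanSpace ℝ (Fin d), ‖v'‖ = ‖v‖ ∧
      ∀ y : EuclideanSpace ℝ (Fin d), (inner ℝ v (A y) : ℝ) = inner ℝ v' y := by
  have hsurj : Function.Surjective A.toLinearMap :=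
    LinearMap.injective_iff_surjective.1 A.injective
  obtain ⟨u, hu⟩ := hsurj v
  have hu' : A u = v := hu
  refine ⟨u, by rw [← hu', A.norm_map], fun y => ?_⟩
  rw [← hu']
  exact A.inner_map_map u y
/-- For a finite similarity IFS with attractor `K`: `K` is not contained in any affine
hyperplane iff there is a diffuse section; moreover either condition implies that `K` is
hyperplane diffuse. -/
theorem attractor_not_in_hyperplane_iff_diffuse_section
    {d : ℕ} {Λ : Type*} [Fintype Λ] [Nonempty Λ]
    (φ : Λ → EuclideanSpace ℝ (Fin d) → EuclideanSpace ℝ (Fin d))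
    (r : Λ → ℝ) (hr : ∀ i, r i ∈ Set.Ioo (0:ℝ) 1)
    (hsim : ∀ i x y, dist (φ i x) (φ i y) = r i * dist x y)
    (K : Set (EuclideanSpace ℝ (Fin d))) (hKc : IsCompact K) (hKne : K.Nonempty)
    (hK : K = ⋃ i, φ i '' K) :
    ((¬ ∃ v : EuclideanSpace ℝ (Fin d), v ≠ 0 ∧ ∃ a : ℝ,
        K ⊆ {x | inner ℝ v x = (a : ℝ)}) ↔
      (∃ Pi : Finset (List Λ), IsSection Pi ∧ ∃ c : ℝ, 0 < c ∧
        ∀ v : EuclideanSpace ℝ (Fin d), v ≠ 0 → ∀ a : ℝ,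
          ∃ w ∈ Pi, (compWord φ w '' K) ∩ thickening c {y | inner ℝ v y = (a : ℝ)} = ∅)) ∧
    ((¬ ∃ v : EuclideanSpace ℝ (Fin d), v ≠ 0 ∧ ∃ a : ℝ,
        K ⊆ {x | inner ℝ v x = (a : ℝ)}) →
      ∃ β : ℝ, 0 < β ∧ HyperplaneDiffuseWith K β) := by
  classical
  -- basic setup
  have hKiU : K ⊆ ⋃ i, φ i '' K := hK.le
  have hKsub : ∀ i, φ i '' K ⊆ K := fun i => (Set.subset_iUnion (fun j => φ j '' K) i).trans hK.ge
  set rmin : ℝ := Finset.univ.inf' Finset.univ_nonempty r with hrmin_def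
  set rmax : ℝ := Finset.univ.sup' Finset.univ_nonempty r with hrmax_def
  have hrmin_le : ∀ i, rmin ≤ r i := fun i => Finset.inf'_le r (Finset.mem_univ i)
  have hrmin_pos : 0 < rmin :=
    (Finset.lt_inf'_iff _).2 fun i _ => (hr i).1
  have hrmax_le : ∀ i, r i ≤ rmax := fun i => Finset.le_sup' r (Finset.mem_univ i)
  have hrmax_lt1 : rmax < 1 :=
    (Finset.sup'_lt_iff _).2 fun i _ => (hr i).2
  have hrmax_pos : 0 < rmax := lt_of_lt_of_le (hr (Classical.arbitrary Λ)).1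
    (hrmax_le (Classical.arbitrary Λ))
  set D : ℝ := diam K with hD_def
  set C : ℝ := D + 1 with hC_def
  have hD0 : 0 ≤ D := diam_nonneg
  have hC1 : 1 ≤ C := by simp [hC_def]; linarith
  have hC0 : 0 < C := lt_of_lt_of_le one_pos hC1
  have hprod_pos : ∀ w : List Λ, 0 < (w.map r).prod := by
    intro w
    refine List.prod_pos ?_
    intro t ht
    obtain ⟨i, _, rfl⟩ := List.mem_map.1 ht
    exact (hr i).1
  -- direction 1 : no hyperplane → diffuse section
  have dir1 : (¬ ∃ v : EuclideanSpace ℝ (Fin d), v ≠ 0 ∧ ∃ a : ℝ,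
        K ⊆ {x | inner ℝ v x = (a : ℝ)}) →
      (∃ Pi : Finset (List Λ), IsSection Pi ∧ ∃ c : ℝ, 0 < c ∧
        ∀ v : EuclideanSpace ℝ (Fin d), v ≠ 0 → ∀ a : ℝ,
          ∃ w ∈ Pi, (compWord φ w '' K) ∩ thickening c {y | inner ℝ v y = (a : ℝ)} = ∅) := by
    intro hyp
    obtain ⟨ε, hε, hεK⟩ := exists_eps_of_not_hyperplane K hKne hyp
    obtain ⟨n, hn⟩ := exists_pow_lt_of_lt_one (show (0:ℝ) < ε / (2 * C) by positivity) hrmax_lt1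
    refine ⟨Finset.image (fun f : Fin n → Λ => List.ofFn f) Finset.univ, ?_, ε / 2,
      by positivity, ?_⟩
    · -- it is a section
      intro x
      refine ⟨List.ofFn (fun i : Fin n => x i), ⟨Finset.mem_image_of_mem _ (Finset.mem_univ _), ?_⟩, ?_⟩
      · intro i
        simp [List.get_ofFn]
      · rintro w ⟨hwmem, hwget⟩
        obtain ⟨f, -, rfl⟩ := Finset.mem_image.1 hwmem
        refine List.ext_get (by simp) ?_
        intro k h1 h2
        have hk := hwget ⟨k, h1⟩
        simp [List.get_ofFn] at hk ⊢
        exact hk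
    · -- diffuseness
      intro v hv a
      have hvn : 0 < ‖v‖ := norm_pos_iff.2 hv
      obtain ⟨x, hxK, hxfar⟩ := hεK (‖v‖⁻¹ • v) (norm_smul_inv_norm hv) (a / ‖v‖)
      have hxfar' : ε * ‖v‖ ≤ |(inner ℝ v x : ℝ) - a| := by
        rw [real_inner_smul_left] at hxfar
        have he : ‖v‖⁻¹ * (inner ℝ v x : ℝ) - a / ‖v‖ = ‖v‖⁻¹ * ((inner ℝ v x : ℝ) - a) := by
          field_simp
        rw [he, abs_mul, abs_of_pos (inv_pos.2 hvn), inv_mul_eq_div, le_div_iff₀ hvn] at hxfar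
        linarith
      obtain ⟨f, x', hx'K, hx'eq⟩ := exists_word_len φ K hKiU n x hxK
      refine ⟨List.ofFn f, Finset.mem_image_of_mem _ (Finset.mem_univ f), ?_⟩
      rw [Set.eq_empty_iff_forall_notMem]
      rintro y ⟨⟨z, hzK, rfl⟩, hythick⟩
      have h1 := abs_inner_lt_of_mem_thickening hv hythick
      have hprodle : ((List.ofFn f).map r).prod ≤ rmax ^ n := by
        have := prod_le_pow_of_le r rmax (fun i => (hr i).1) hrmax_le (List.ofFn f)
        simpa using this
      have hd : dist (compWord φ (List.ofFn f) z) x ≤ ε / (2 * C) * D := by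
        rw [← hx'eq, dist_compWord φ r hsim]
        have hdz : dist z x' ≤ D := dist_le_diam_of_mem hKc.isBounded hzK hx'K
        calc ((List.ofFn f).map r).prod * dist z x'
            ≤ rmax ^ n * D := mul_le_mul hprodle hdz dist_nonneg (pow_nonneg hrmax_pos.le n)
        _ ≤ ε / (2 * C) * D := mul_le_mul_of_nonneg_right hn.le hD0
      have hd2 : dist (compWord φ (List.ofFn f) z) x ≤ ε / 2 := by
        calc dist (compWord φ (List.ofFn f) z) x ≤ ε / (2 * C) * D := hd
        _ ≤ ε / (2 * C) * C := by
            refine mul_le_mul_of_nonneg_left (by simp [hC_def]) (by positivity)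
        _ = ε / 2 := by field_simp
      have e1 : (inner ℝ v x : ℝ) - a =
          ((inner ℝ v (compWord φ (List.ofFn f) z) : ℝ) - a) +
            (inner ℝ v (x - compWord φ (List.ofFn f) z) : ℝ) := by
        rw [inner_sub_right]; ring
      have e2 : |(inner ℝ v (x - compWord φ (List.ofFn f) z) : ℝ)| ≤ ‖v‖ * (ε / 2) := by
        refine le_trans (abs_real_inner_le_norm _ _) ?_
        have : ‖x - compWord φ (List.ofFn f) z‖ ≤ ε / 2 := by
          rw [← dist_eq_norm, dist_comm]
          exact hd2
        exact mul_le_mul_of_nonneg_left this (norm_nonneg v)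
      have e3 : |(inner ℝ v x : ℝ) - a| ≤
          |(inner ℝ v (compWord φ (List.ofFn f) z) : ℝ) - a| +
            |(inner ℝ v (x - compWord φ (List.ofFn f) z) : ℝ)| := by
        rw [e1]; exact abs_add_le _ _
      have : ε * ‖v‖ < ε / 2 * ‖v‖ + ‖v‖ * (ε / 2) := by
        calc ε * ‖v‖ ≤ |(inner ℝ v x : ℝ) - a| := hxfar'
        _ ≤ |(inner ℝ v (compWord φ (List.ofFn f) z) : ℝ) - a| +
              |(inner ℝ v (x - compWord φ (List.ofFn f) z) : ℝ)| := e3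
        _ < ε / 2 * ‖v‖ + ‖v‖ * (ε / 2) := by
            exact add_lt_add_of_lt_of_le h1 e2
      nlinarith
  -- direction 2 : diffuse section → no hyperplane
  have dir2 : (∃ Pi : Finset (List Λ), IsSection Pi ∧ ∃ c : ℝ, 0 < c ∧
        ∀ v : EuclideanSpace ℝ (Fin d), v ≠ 0 → ∀ a : ℝ,
          ∃ w ∈ Pi, (compWord φ w '' K) ∩ thickening c {y | inner ℝ v y = (a : ℝ)} = ∅) →
      (¬ ∃ v : EuclideanSpace ℝ (Fin d), v ≠ 0 ∧ ∃ a : ℝ,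
        K ⊆ {x | inner ℝ v x = (a : ℝ)}) := by
    rintro ⟨Pi, -, c, hc, hdiff⟩ ⟨v, hv, a, hsubL⟩
    obtain ⟨w, -, hempty⟩ := hdiff v hv a
    obtain ⟨x₀, hx₀⟩ := hKne
    have hmem1 : compWord φ w x₀ ∈ compWord φ w '' K := Set.mem_image_of_mem _ hx₀
    have hmem2 : compWord φ w x₀ ∈ thickening c {y | inner ℝ v y = (a : ℝ)} :=
      self_subset_thickening hc _ (hsubL (compWord_image_subset φ K hKsub w hmem1))
    have : compWord φ w x₀ ∈ (compWord φ w '' K) ∩ thickening c {y | inner ℝ v y = (a : ℝ)} :=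
      ⟨hmem1, hmem2⟩
    rw [hempty] at this
    exact this
  -- direction 3 : no hyperplane → hyperplane diffuse
  have dir3 : (¬ ∃ v : EuclideanSpace ℝ (Fin d), v ≠ 0 ∧ ∃ a : ℝ,
        K ⊆ {x | inner ℝ v x = (a : ℝ)}) →
      ∃ β : ℝ, 0 < β ∧ HyperplaneDiffuseWith K β := by
    intro hyp
    obtain ⟨ε, hε, hεK⟩ := exists_eps_of_not_hyperplane K hKne hyp
    refine ⟨ε * rmin / (2 * C), by positivity, 1, one_pos, ?_⟩
    intro ξ hξ hξ1 x hxK v hv c'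
    have hvn : 0 < ‖v‖ := norm_pos_iff.2 hv
    set s : ℝ := ξ / (2 * C) with hs_def
    have hs0 : 0 < s := by positivity
    have hs1 : s < 1 := by
      rw [hs_def, div_lt_one (by positivity)]
      linarith
    obtain ⟨n, hn⟩ := exists_pow_lt_of_lt_one hs0 hrmax_lt1
    obtain ⟨w, hxw, hw1, hw2⟩ := exists_word_scale φ r hr K hKiU rmin rmax hrmin_le
      hrmin_pos hrmax_le n s hn hs1 x hxK
    set ρ : ℝ := (w.map r).prod with hρ_def
    have hρ : 0 < ρ := hprod_pos w
    obtain ⟨A, b, hAb⟩ := compWord_affine φ r hr hsim w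
    obtain ⟨v', hv'n, hv'⟩ := exists_adjoint_vec A v
    have hv'0 : v' ≠ 0 := by
      rw [← norm_ne_zero_iff, hv'n]
      exact hvn.ne'
    have hv'pos : 0 < ‖v'‖ := norm_pos_iff.2 hv'0
    obtain ⟨y, hyK, hyfar⟩ := hεK (‖v'‖⁻¹ • v') (norm_smul_inv_norm hv'0)
      ((c' - (inner ℝ v b : ℝ)) / (ρ * ‖v'‖))
    obtain ⟨x₁, hx₁K, hx₁eq⟩ := hxw
    refine ⟨compWord φ w y, ⟨⟨compWord_image_subset φ K hKsub w (Set.mem_image_of_mem _ hyK), ?_⟩, ?_⟩⟩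
    · -- in the ball
      rw [mem_ball, ← hx₁eq, dist_compWord φ r hsim, ← hρ_def]
      have hdyx : dist y x₁ ≤ D := dist_le_diam_of_mem hKc.isBounded hyK hx₁K
      calc ρ * dist y x₁ ≤ s * D := mul_le_mul hw1 hdyx dist_nonneg hs0.le
      _ ≤ s * C := mul_le_mul_of_nonneg_left (by simp [hC_def]) hs0.le
      _ = ξ / 2 := by rw [hs_def]; field_simp
      _ < ξ := by linarith
    · -- out of the thickening
      intro hmem
      have h1 := abs_inner_lt_of_mem_thickening hv hmem
      -- compute inner ℝ v (compWord φ w y)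
      have e1 : (inner ℝ v (compWord φ w y) : ℝ) = ρ * (inner ℝ v' y : ℝ) + (inner ℝ v b : ℝ) := by
        rw [hAb y, inner_add_right, real_inner_smul_right, hv' y]
      have key : ε * (ρ * ‖v'‖) ≤ |(inner ℝ v (compWord φ w y) : ℝ) - c'| := by
        have e2 : (ρ * ‖v'‖) * ((inner ℝ (‖v'‖⁻¹ • v') y : ℝ) -
            (c' - (inner ℝ v b : ℝ)) / (ρ * ‖v'‖)) = (inner ℝ v (compWord φ w y) : ℝ) - c' := by
          rw [e1, real_inner_smul_left]
          field_simp
          ring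
        calc ε * (ρ * ‖v'‖)
            = (ρ * ‖v'‖) * ε := mul_comm _ _
        _ ≤ (ρ * ‖v'‖) * |(inner ℝ (‖v'‖⁻¹ • v') y : ℝ) - (c' - (inner ℝ v b : ℝ)) / (ρ * ‖v'‖)| :=
              mul_le_mul_of_nonneg_left hyfar (by positivity)
        _ = |(ρ * ‖v'‖) * ((inner ℝ (‖v'‖⁻¹ • v') y : ℝ) - (c' - (inner ℝ v b : ℝ)) / (ρ * ‖v'‖))| := by
              rw [abs_mul, abs_of_pos (by positivity : (0:ℝ) < ρ * ‖v'‖), mul_comm]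
        _ = |(inner ℝ v (compWord φ w y) : ℝ) - c'| := by rw [e2]
      have hfin : ε * rmin / (2 * C) * ξ * ‖v‖ < ε * (ρ * ‖v'‖) := by
        have h4 : ε * rmin / (2 * C) * ξ = ε * (rmin * s) := by
          rw [hs_def]; field_simp
        rw [h4, hv'n]
        calc ε * (rmin * s) * ‖v‖ < ε * ρ * ‖v‖ := by
              refine mul_lt_mul_of_pos_right ?_ hvn
              exact mul_lt_mul_of_pos_left hw2 hε
        _ = ε * (ρ * ‖v‖) := by ring
      linarith
  exact ⟨⟨dir1, dir2⟩, dir3⟩
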